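/- Let $E$ be a Hilbert space, $\sigma > 0$, $\theta \in [0, 2\pi)$. A closed subspace $\mathcal{M}$ of $H^2_E(\mathbb{T}) \oplus E$ is reducing for the Brownian shift $B^E_{\sigma, e^{i\theta}}$ if and only if there exists a closed subspace $G \subseteq E$ such that $\mathcal{M} = H^2_G(\mathbb{T}) \oplus G$. -/

import Mathlib

open Complex

noncomputable section
set_option linter.unusedSectionVars false

/-- The `E`-valued Hardy space `H²_E(𝕋)`, modeled by the ℓ² space of its
Taylor/Fourier coefficient sequences. -/
abbrev Hardy (E : Type*) [NormedAddCommGroup E] [InnerProductSpace ℂ E] [CompleteSpace E] :=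
  lp (fun _ : ℕ => E) 2

variable {E : Type*} [NormedAddCommGroup E] [InnerProductSpace ℂ E] [CompleteSpace E]

def shiftSeq (f : ℕ → E) : ℕ → E
  | 0 => 0
  | n + 1 => f n

lemma memℓp_shiftSeq {f : ℕ → E} (hf : Memℓp f 2) : Memℓp (shiftSeq f) 2 := by
  have h := hf.summable (by norm_num)
  exact memℓp_gen ((summable_nat_add_iff 1).mp (by simpa [shiftSeq] using h))

/-- The shift `S_E : f ↦ z f` on `H²_E(𝕋)`. -/
def shiftOp (f : Hardy E) : Hardy E := ⟨shiftSeq f, memℓp_shiftSeq (lp.memℓp f)⟩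

/-- The inclusion `i_E : E → H²_E(𝕋)` sending `x` to the constant function `x`. -/
def inclOp (y : E) : Hardy E := lp.single 2 (0 : ℕ) y

/-- The Brownian shift `B^E_{σ, e^{iθ}}` of covariance `σ` and angle `θ` on
`H²_E(𝕋) ⊕ E`: `(f, y) ↦ (zf + σ y, e^{iθ} y)`. -/
def BS (σ θ : ℝ) (v : Hardy E × E) : Hardy E × E :=
  (shiftOp v.1 + (σ : ℂ) • inclOp v.2, Complex.exp (θ * I) • v.2)

lemma memℓp_tailSeq {f : ℕ → E} (hf : Memℓp f 2) : Memℓp (fun n => f (n + 1)) 2 := by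
  have h := hf.summable (by norm_num)
  exact memℓp_gen ((summable_nat_add_iff 1).2 h)

/-- The backward shift `S_E^* : f ↦ (f - f(0))/z` on `H²_E(𝕋)`. -/
def tailOp (f : Hardy E) : Hardy E := ⟨fun n => f (n + 1), memℓp_tailSeq (lp.memℓp f)⟩

/-- The adjoint of the Brownian shift: `(f, y) ↦ (S_E^* f, σ f̂(0) + e^{-iθ} y)`. -/
def BSadj (σ θ : ℝ) (v : Hardy E × E) : Hardy E × E :=
  (tailOp v.1, (σ : ℂ) • (v.1 : ℕ → E) 0 + Complex.exp (-(θ * I)) • v.2)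

lemma coeFn_shiftOp (f : Hardy E) : (shiftOp f : ℕ → E) = shiftSeq f := rfl

lemma coeFn_tailOp (f : Hardy E) : (tailOp f : ℕ → E) = fun n => f (n + 1) := rfl

lemma inclOp_apply_zero (y : E) : (inclOp y : ℕ → E) 0 = y := lp.single_apply_self _ _ _

lemma inclOp_apply_succ (y : E) (n : ℕ) : (inclOp y : ℕ → E) (n + 1) = 0 :=
  lp.single_apply_ne _ _ _ (Nat.succ_ne_zero n)

lemma shiftOp_single (y : E) (n : ℕ) :
    shiftOp (lp.single 2 n y : Hardy E) = lp.single 2 (n + 1) y := by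
  apply lp.ext; funext m
  match m with
  | 0 =>
    have : ((lp.single 2 (n + 1) y : Hardy E) : ℕ → E) 0 = 0 :=
      lp.single_apply_ne _ _ _ (Nat.succ_ne_zero n).symm
    simp [coeFn_shiftOp, shiftSeq, this]
  | m + 1 =>
    by_cases h : m = n
    · subst h
      simp [coeFn_shiftOp, shiftSeq, lp.single_apply_self]
    · have h1 : ((lp.single 2 n y : Hardy E) : ℕ → E) m = 0 := lp.single_apply_ne _ _ _ h
      have h2 : ((lp.single 2 (n + 1) y : Hardy E) : ℕ → E) (m + 1) = 0 :=
        lp.single_apply_ne _ _ _ (fun hc => h (Nat.succ_injective hc))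
      simp [coeFn_shiftOp, shiftSeq, h1, h2, Pi.single_apply, h]

/-- Theorem 5.1: a closed subspace `M ⊆ H²_E(𝕋) ⊕ E` is reducing for the Brownian shift
`B^E_{σ,e^{iθ}}` iff `M = H²_G(𝕋) ⊕ G` for some closed subspace `G ⊆ E`, where
`H²_G(𝕋)` is the set of functions all of whose coefficients lie in `G`. -/
theorem reducing_subspaces_classification
    (σ θ : ℝ) (hσ : 0 < σ) (hθ : θ ∈ Set.Ico 0 (2 * Real.pi))
    (M : Submodule ℂ (Hardy E × E)) (hMc : IsClosed (M : Set (Hardy E × E))) :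
    ((∀ v ∈ M, BS σ θ v ∈ M) ∧ (∀ v ∈ M, BSadj σ θ v ∈ M)) ↔
      ∃ G : Submodule ℂ E, IsClosed (G : Set E) ∧
        (M : Set (Hardy E × E)) =
          {p : Hardy E × E | (∀ n : ℕ, (p.1 : ℕ → E) n ∈ G) ∧ p.2 ∈ G} := by
  have hσℂ : (σ : ℂ) ≠ 0 := by exact_mod_cast hσ.ne'
  constructor
  · rintro ⟨hB, hBa⟩
    set G : Submodule ℂ E := M.comap (LinearMap.inr ℂ (Hardy E) E) with hGdef
    have hGmem : ∀ y : E, y ∈ G ↔ ((0 : Hardy E), y) ∈ M := fun y => Iff.rfl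
    have hGc : IsClosed (G : Set E) := by
      have : (G : Set E) = (fun y : E => ((0 : Hardy E), y)) ⁻¹' (M : Set (Hardy E × E)) := rfl
      rw [this]
      exact hMc.preimage (Continuous.prodMk_right _)
    -- key identity: BSadj (BS v) = (v.1, (σ*σ) • v.2 + v.2)
    have hkey : ∀ v : Hardy E × E, BSadj σ θ (BS σ θ v) =
        (v.1, ((σ : ℂ) * σ) • v.2 + v.2) := by
      intro v
      unfold BS BSadj
      refine Prod.ext ?_ ?_
      · apply lp.ext; funext n
        show shiftSeq (v.1 : ℕ → E) (n + 1) + (σ : ℂ) • (inclOp v.2 : ℕ → E) (n + 1) = v.1 n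
        rw [inclOp_apply_succ, smul_zero, add_zero]; rfl
      · simp only [lp.coeFn_add, lp.coeFn_smul, Pi.add_apply, Pi.smul_apply,
          coeFn_shiftOp, inclOp_apply_zero]
        have h0 : shiftSeq (v.1 : ℕ → E) 0 = 0 := rfl
        rw [h0, zero_add, smul_smul, smul_smul, ← Complex.exp_add]
        simp
    -- second components of members are in G
    have hsnd : ∀ v ∈ M, ((0 : Hardy E), v.2) ∈ M := by
      intro v hv
      have h1 := hBa _ (hB _ hv)
      rw [hkey] at h1
      have h2 := M.sub_mem h1 hv
      have h3 : (v.1, ((σ : ℂ) * σ) • v.2 + v.2) - v = ((0 : Hardy E), ((σ : ℂ) * σ) • v.2) := by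
        refine Prod.ext ?_ ?_ <;> simp
      rw [h3] at h2
      have h4 := M.smul_mem (((σ : ℂ) * σ)⁻¹) h2
      have h5 : (((σ : ℂ) * σ)⁻¹) • ((0 : Hardy E), ((σ : ℂ) * σ) • v.2)
          = ((0 : Hardy E), v.2) := by
        refine Prod.ext ?_ ?_
        · simp
        · rw [Prod.smul_snd, smul_smul, inv_mul_cancel₀ (mul_ne_zero hσℂ hσℂ), one_smul]
      rwa [h5] at h4
    have hfst : ∀ v ∈ M, (v.1, (0 : E)) ∈ M := by
      intro v hv
      have h2 := M.sub_mem hv (hsnd v hv)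
      have h3 : v - ((0 : Hardy E), v.2) = (v.1, (0 : E)) := by
        refine Prod.ext ?_ ?_ <;> simp
      rwa [h3] at h2
    -- receive shift invariance on the first factor
    have hshift : ∀ f : Hardy E, (f, (0 : E)) ∈ M → (shiftOp f, (0 : E)) ∈ M := by
      intro f hf
      have h := hB _ hf
      have h2 : BS σ θ (f, (0 : E)) = (shiftOp f, (0 : E)) := by
        unfold BS
        refine Prod.ext ?_ ?_
        · show shiftOp f + (σ : ℂ) • inclOp 0 = shiftOp f
          have : inclOp (0 : E) = (0 : Hardy E) := by
            apply lp.ext; funext n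
            match n with
            | 0 => simp [inclOp_apply_zero]
            | n + 1 => simp [inclOp_apply_succ]
          rw [this]; simp
        · simp
      rwa [h2] at h
    -- singles with entry in G lie in M
    have hsingle : ∀ y ∈ G, ∀ n : ℕ, ((lp.single 2 n y : Hardy E), (0 : E)) ∈ M := by
      intro y hy n
      induction n with
      | zero =>
        have h := hfst _ (hB _ ((hGmem y).1 hy))
        have h2 : (BS σ θ ((0 : Hardy E), y)).1 = (σ : ℂ) • inclOp y := by
          show shiftOp 0 + (σ : ℂ) • inclOp y = (σ : ℂ) • inclOp y
          have : shiftOp (0 : Hardy E) = 0 := by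
            apply lp.ext; funext n
            match n with
            | 0 => rfl
            | n + 1 => simp [coeFn_shiftOp, shiftSeq]
          rw [this]; simp
        rw [h2] at h
        have h3 := M.smul_mem ((σ : ℂ)⁻¹) h
        have h4 : ((σ : ℂ)⁻¹) • ((σ : ℂ) • inclOp y, (0 : E)) = ((inclOp y : Hardy E), (0 : E)) := by
          refine Prod.ext ?_ ?_
          · rw [Prod.smul_fst, smul_smul, inv_mul_cancel₀ hσℂ, one_smul]
          · simp
        rw [h4] at h3
        exact h3
      | succ n ih =>
        have := hshift _ ih
        rwa [shiftOp_single] at this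
    -- tails and zeroth coefficients
    have htail : ∀ f : Hardy E, (f, (0 : E)) ∈ M →
        (tailOp f, (0 : E)) ∈ M ∧ (f : ℕ → E) 0 ∈ G := by
      intro f hf
      have h := hBa _ hf
      have h2 : BSadj σ θ (f, (0 : E)) = (tailOp f, (σ : ℂ) • (f : ℕ → E) 0) := by
        unfold BSadj
        refine Prod.ext rfl ?_
        simp
      rw [h2] at h
      refine ⟨hfst _ h, ?_⟩
      have h3 : (σ : ℂ) • (f : ℕ → E) 0 ∈ G := (hGmem _).2 (hsnd _ h)
      have h4 := G.smul_mem ((σ : ℂ)⁻¹) h3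
      rwa [smul_smul, inv_mul_cancel₀ hσℂ, one_smul] at h4
    have hcoef : ∀ n : ℕ, ∀ f : Hardy E, (f, (0 : E)) ∈ M → (f : ℕ → E) n ∈ G := by
      intro n
      induction n with
      | zero => exact fun f hf => (htail f hf).2
      | succ n ih =>
        intro f hf
        exact ih (tailOp f) (htail f hf).1
    refine ⟨G, hGc, ?_⟩
    ext p
    constructor
    · intro hp
      exact ⟨fun n => hcoef n p.1 (hfst p hp), (hGmem _).2 (hsnd p hp)⟩
    · rintro ⟨hn, h2⟩
      have hs : HasSum (fun n => ((lp.single 2 n ((p.1 : ℕ → E) n) : Hardy E), (0 : E)))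
          (p.1, (0 : E)) :=
        (lp.hasSum_single (by norm_num) p.1).prodMk hasSum_zero
      have h1 : (p.1, (0 : E)) ∈ M := by
        refine hMc.mem_of_tendsto hs (Filter.Eventually.of_forall fun s => ?_)
        exact M.sum_mem fun n _ => hsingle _ (hn n) n
      have h0 : ((0 : Hardy E), p.2) ∈ M := (hGmem _).1 h2
      have : (p.1, (0 : E)) + ((0 : Hardy E), p.2) = p := by
        refine Prod.ext ?_ ?_ <;> simp
      simpa [this] using M.add_mem h1 h0
  · rintro ⟨G, hGc, hMeq⟩
    have hmem : ∀ v : Hardy E × E, v ∈ M ↔ ((∀ n : ℕ, (v.1 : ℕ → E) n ∈ G) ∧ v.2 ∈ G) := by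
      intro v
      rw [← SetLike.mem_coe, hMeq]
      rfl
    constructor
    · intro v hv
      obtain ⟨hn, h2⟩ := (hmem v).1 hv
      refine (hmem _).2 ⟨?_, G.smul_mem _ h2⟩
      intro n
      show ((shiftOp v.1 + (σ : ℂ) • inclOp v.2 : Hardy E) : ℕ → E) n ∈ G
      match n with
      | 0 =>
        simp only [lp.coeFn_add, lp.coeFn_smul, Pi.add_apply, Pi.smul_apply,
          coeFn_shiftOp, inclOp_apply_zero]
        have h0 : shiftSeq (v.1 : ℕ → E) 0 = 0 := rfl
        rw [h0, zero_add]
        exact G.smul_mem _ h2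
      | n + 1 =>
        simp only [lp.coeFn_add, lp.coeFn_smul, Pi.add_apply, Pi.smul_apply,
          coeFn_shiftOp, inclOp_apply_succ]
        have h0 : shiftSeq (v.1 : ℕ → E) (n + 1) = (v.1 : ℕ → E) n := rfl
        rw [h0, smul_zero, add_zero]
        exact hn n
    · intro v hv
      obtain ⟨hn, h2⟩ := (hmem v).1 hv
      refine (hmem _).2 ⟨fun n => hn (n + 1), G.add_mem (G.smul_mem _ (hn 0)) (G.smul_mem _ h2)⟩
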